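/- Let X be a set with a symmetric reflexive relation R ⊆ X × X, let r > 0, and let U_r = {(s,t) ∈ I × I : |s−t| < r}. Let σ = {v₀,…,v_k} be a simplex of the clique complex Σ^X_R, and let S(σ) be the subcomplex of Σ^{X×I}_{R×U_r} consisting of all simplices whose vertices have the form (v_i, t) with v_i ∈ σ and t ∈ I. Then S(σ) is acyclic. -/

import Mathlib

/-! Simplicial (Vietoris–Rips) homology of the clique complex of a relation
`U ⊆ X × X`, built from ordered simplices with integer coefficients, together
with the induced maps coming from inclusions of relations and the resulting
inverse-limit Vietoris–Rips homology of a semi-uniform structure. -/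

namespace VR

variable {X : Type*}

/-- Ordered `n`-simplices of the clique (Vietoris–Rips) complex of the relation `U`:
`(n+1)`-tuples of vertices that are pairwise related by `U`. -/
def Simp (U : Set (X × X)) (n : ℕ) : Type _ :=
  {σ : Fin (n + 1) → X // ∀ i j, (σ i, σ j) ∈ U}

/-- Simplicial `n`-chains with integer coefficients. -/
abbrev Chains (U : Set (X × X)) (n : ℕ) : Type _ := Simp U n →₀ ℤ

/-- The `i`-th face of an ordered simplex. -/
def face (U : Set (X × X)) {n : ℕ} (i : Fin (n + 2)) (σ : Simp U (n + 1)) : Simp U n :=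
  ⟨σ.1 ∘ i.succAbove, fun _ _ => σ.2 _ _⟩

/-- The simplicial boundary map. -/
noncomputable def bd (U : Set (X × X)) (n : ℕ) : Chains U (n + 1) →+ Chains U n :=
  Finsupp.liftAddHom fun σ => zmultiplesHom _
    (∑ i : Fin (n + 2), (-1 : ℤ) ^ (i : ℕ) • Finsupp.single (face U i σ) (1 : ℤ))

/-- The augmentation map on `0`-chains. -/
noncomputable def aug (U : Set (X × X)) : Chains U 0 →+ ℤ :=
  Finsupp.liftAddHom fun _ => zmultiplesHom ℤ (1 : ℤ)

/-- Cycles (unreduced). -/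
noncomputable def cycles (U : Set (X × X)) : (n : ℕ) → AddSubgroup (Chains U n)
  | 0 => ⊤
  | n + 1 => (bd U n).ker

/-- Reduced cycles (using the augmentation in degree `0`). -/
noncomputable def rcycles (U : Set (X × X)) : (n : ℕ) → AddSubgroup (Chains U n)
  | 0 => (aug U).ker
  | n + 1 => (bd U n).ker

/-- Boundaries. -/
noncomputable def bdries (U : Set (X × X)) (n : ℕ) : AddSubgroup (Chains U n) :=
  (bd U n).range

/-- Simplicial homology of the clique complex of `U`. -/
noncomputable def H (U : Set (X × X)) (n : ℕ) : Type _ :=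
  ↥(cycles U n) ⧸ (bdries U n).addSubgroupOf (cycles U n)

noncomputable instance (U : Set (X × X)) (n : ℕ) : AddCommGroup (H U n) :=
  inferInstanceAs (AddCommGroup (_ ⧸ _))

/-- Reduced simplicial homology of the clique complex of `U`. -/
noncomputable def redH (U : Set (X × X)) (n : ℕ) : Type _ :=
  ↥(rcycles U n) ⧸ (bdries U n).addSubgroupOf (rcycles U n)

noncomputable instance (U : Set (X × X)) (n : ℕ) : AddCommGroup (redH U n) :=
  inferInstanceAs (AddCommGroup (_ ⧸ _))

/-- The chain map induced by an inclusion of relations `U ⊆ U'`. -/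
noncomputable def chainsMap {U U' : Set (X × X)} (h : U ⊆ U') (n : ℕ) :
    Chains U n →+ Chains U' n :=
  Finsupp.mapDomain.addMonoidHom fun σ => ⟨σ.1, fun i j => h (σ.2 i j)⟩

lemma bd_comm {U U' : Set (X × X)} (h : U ⊆ U') (n : ℕ) (x : Chains U (n + 1)) :
    bd U' n (chainsMap h (n + 1) x) = chainsMap h n (bd U n x) := by
  induction x using Finsupp.induction_linear with
  | zero => simp
  | add a b ha hb => simp [map_add, ha, hb]
  | single σ m =>
    simp only [chainsMap]
    erw [Finsupp.mapDomain.addMonoidHom_apply, Finsupp.mapDomain_single]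
    simp only [bd]
    erw [Finsupp.liftAddHom_apply_single, Finsupp.liftAddHom_apply_single]
    simp only [zmultiplesHom_apply]
    rw [map_zsmul, map_sum]
    congr 1
    refine Finset.sum_congr rfl fun i _ => ?_
    erw [map_zsmul, Finsupp.mapDomain.addMonoidHom_apply, Finsupp.mapDomain_single]
    rfl

lemma chainsMap_cycles {U U' : Set (X × X)} (h : U ⊆ U') (n : ℕ)
    (x : ↥(cycles U n)) : chainsMap h n x.1 ∈ cycles U' n := by
  cases n with
  | zero => trivial
  | succ n =>
    have hx : bd U n x.1 = 0 := x.2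
    show chainsMap h (n + 1) x.1 ∈ (bd U' n).ker
    rw [AddMonoidHom.mem_ker, bd_comm h n x.1, hx, map_zero]

/-- The induced map on cycles. -/
noncomputable def cyclesMap {U U' : Set (X × X)} (h : U ⊆ U') (n : ℕ) :
    ↥(cycles U n) →+ ↥(cycles U' n) :=
  AddMonoidHom.codRestrict ((chainsMap h n).comp (cycles U n).subtype) (cycles U' n)
    (fun x => chainsMap_cycles h n x)

/-- The induced map on homology. -/
noncomputable def Hmap {U U' : Set (X × X)} (h : U ⊆ U') (n : ℕ) : H U n →+ H U' n :=
  QuotientAddGroup.map _ _ (cyclesMap h n) (by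
    intro x hx
    rcases hx with ⟨y, hy⟩
    refine AddSubgroup.mem_comap.mpr ?_
    show chainsMap h n x.1 ∈ (bd U' n).range
    exact ⟨chainsMap h (n + 1) y, by rw [bd_comm h n y, hy]; rfl⟩)

/-- The Vietoris–Rips homology of a semi-uniform structure `F`, presented concretely
as the inverse limit (group of compatible families) of the homologies `H U n`
over `U ∈ F`, directed by inclusion. -/
noncomputable def VRhomology (F : Set (Set (X × X))) (n : ℕ) :
    AddSubgroup ((U : F) → H U.1 n) where
  carrier := {x | ∀ (U U' : F) (h : U.1 ⊆ U'.1), Hmap h n (x U) = x U'}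
  zero_mem' := by intro U U' h; simp
  add_mem' := by intro a b ha hb U U' h; simp [ha U U' h, hb U U' h]
  neg_mem' := by intro a ha U U' h; simp [ha U U' h]

end VR


namespace VRAux

open VR Finsupp

lemma succAbove_val {m : ℕ} (p : Fin (m+1)) (k : Fin m) :
    (p.succAbove k : ℕ) = if (k:ℕ) < p then (k:ℕ) else (k:ℕ)+1 := by
  have h : (k.castSucc < p) ↔ ((k:ℕ) < p) := by rw [Fin.lt_def, Fin.coe_castSucc]
  rw [Fin.succAbove]
  split_ifs with h1 h2 h2
  · rfl
  · exact absurd (h.mp h1) h2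
  · exact absurd (h.mpr h2) h1
  · rfl

variable {Y : Type*} (U : Set (Y × Y)) (g g' : Y → Y)

/-- natural-number-indexed face map -/
def fc (n : ℕ) (j : ℕ) (σ : Simp U (n + 1)) : Simp U n :=
  face U ⟨min j (n + 1), by omega⟩ σ

lemma fc_val (n j : ℕ) (σ : Simp U (n + 1)) (k : Fin (n + 1)) :
    (fc U n j σ).1 k = if ((k:ℕ) < j ∧ (k:ℕ) < n+1) then σ.1 ⟨(k:ℕ), by have := k.isLt; omega⟩
      else σ.1 ⟨(k:ℕ)+1, by have := k.isLt; omega⟩ := by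
  have hmin : ((k:ℕ) < min j (n+1)) ↔ ((k:ℕ) < j ∧ (k:ℕ) < n+1) := lt_min_iff
  rcases lt_or_ge ((k:ℕ)) (min j (n+1)) with h | h
  · rw [if_pos (hmin.mp h)]
    refine congrArg σ.1 (Fin.ext ?_)
    rw [succAbove_val]
    exact if_pos h
  · rw [if_neg (fun hc => absurd (hmin.mpr hc) (not_lt.mpr h))]
    refine congrArg σ.1 (Fin.ext ?_)
    rw [succAbove_val]
    exact if_neg (not_lt.mpr h)

variable (H : ∀ x y, (x, y) ∈ U →
    (g x, g y) ∈ U ∧ (g x, g' y) ∈ U ∧ (g' x, g y) ∈ U ∧ (g' x, g' y) ∈ U)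

include H

/-- The `i`-th prism simplex over `σ`. -/
def pr (n : ℕ) (i : ℕ) (σ : Simp U n) : Simp U (n + 1) :=
  ⟨fun j => if h : ((j : ℕ) ≤ i ∧ (j : ℕ) ≤ n) then g (σ.1 ⟨(j : ℕ), by omega⟩)
            else g' (σ.1 ⟨(j : ℕ) - 1, by have := j.isLt; omega⟩), by
    intro a b
    show (dite _ _ _, dite _ _ _) ∈ U
    by_cases ha : ((a:ℕ) ≤ i ∧ (a:ℕ) ≤ n) <;> by_cases hb : ((b:ℕ) ≤ i ∧ (b:ℕ) ≤ n)
    · rw [dif_pos ha, dif_pos hb]; exact (H _ _ (σ.2 _ _)).1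
    · rw [dif_pos ha, dif_neg hb]; exact (H _ _ (σ.2 _ _)).2.1
    · rw [dif_neg ha, dif_pos hb]; exact (H _ _ (σ.2 _ _)).2.2.1
    · rw [dif_neg ha, dif_neg hb]; exact (H _ _ (σ.2 _ _)).2.2.2⟩

lemma pr_val (n i : ℕ) (σ : Simp U n) (j : Fin (n+2)) :
    (pr U g g' H n i σ).1 j = if h : ((j : ℕ) ≤ i ∧ (j : ℕ) ≤ n) then g (σ.1 ⟨(j : ℕ), by omega⟩)
      else g' (σ.1 ⟨(j : ℕ) - 1, by have := j.isLt; omega⟩) := rfl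

/-- simplex which is `g` before the cut `c` and `g'` from the cut on. -/
def mu (n : ℕ) (c : ℕ) (σ : Simp U (n + 1)) : Simp U (n + 1) :=
  ⟨fun k => if (k : ℕ) < c then g (σ.1 k) else g' (σ.1 k), by
    intro a b
    show (ite _ _ _, ite _ _ _) ∈ U
    by_cases ha : ((a:ℕ) < c) <;> by_cases hb : ((b:ℕ) < c)
    · rw [if_pos ha, if_pos hb]; exact (H _ _ (σ.2 _ _)).1
    · rw [if_pos ha, if_neg hb]; exact (H _ _ (σ.2 _ _)).2.1
    · rw [if_neg ha, if_pos hb]; exact (H _ _ (σ.2 _ _)).2.2.1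
    · rw [if_neg ha, if_neg hb]; exact (H _ _ (σ.2 _ _)).2.2.2⟩

lemma mu_val (n c : ℕ) (σ : Simp U (n+1)) (k : Fin (n+2)) :
    (mu U g g' H n c σ).1 k = if (k : ℕ) < c then g (σ.1 k) else g' (σ.1 k) := rfl

set_option maxHeartbeats 1000000 in
lemma L1 (n i j : ℕ) (hi : i ≤ n + 1) (hj : j < i) (σ : Simp U (n+1)) :
    fc U (n+1) j (pr U g g' H (n+1) i σ) = pr U g g' H n (i-1) (fc U n j σ) := by
  apply Subtype.ext
  funext k
  have hk := k.isLt
  simp only [fc_val, pr_val, mu_val, Fin.val_mk]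
  split_ifs <;> first
    | (exfalso; omega)
    | (refine congrArg _ (congrArg _ (Fin.ext ?_));
       first
         | omega
         | (simp only [Fin.val_mk]; omega)
         | simp only [Fin.val_mk])

set_option maxHeartbeats 1000000 in
lemma L2 (n i : ℕ) (hi : i ≤ n + 1) (σ : Simp U (n+1)) :
    fc U (n+1) i (pr U g g' H (n+1) i σ) = mu U g g' H n i σ := by
  apply Subtype.ext
  funext k
  have hk := k.isLt
  simp only [fc_val, pr_val, mu_val, Fin.val_mk]
  split_ifs <;> first
    | (exfalso; omega)
    | (refine congrArg _ (congrArg _ (Fin.ext ?_));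
       first
         | omega
         | (simp only [Fin.val_mk]; omega)
         | simp only [Fin.val_mk])

set_option maxHeartbeats 1000000 in
lemma L3 (n i : ℕ) (hi : i ≤ n + 1) (σ : Simp U (n+1)) :
    fc U (n+1) (i+1) (pr U g g' H (n+1) i σ) = mu U g g' H n (i+1) σ := by
  apply Subtype.ext
  funext k
  have hk := k.isLt
  simp only [fc_val, pr_val, mu_val, Fin.val_mk]
  split_ifs <;> first
    | (exfalso; omega)
    | (refine congrArg _ (congrArg _ (Fin.ext ?_));
       first
         | omega
         | (simp only [Fin.val_mk]; omega)
         | simp only [Fin.val_mk])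

set_option maxHeartbeats 1000000 in
lemma L4 (n i j : ℕ) (hi : i ≤ n) (hj : i + 1 < j) (hj2 : j ≤ n + 2) (σ : Simp U (n+1)) :
    fc U (n+1) j (pr U g g' H (n+1) i σ) = pr U g g' H n i (fc U n (j-1) σ) := by
  apply Subtype.ext
  funext k
  have hk := k.isLt
  simp only [fc_val, pr_val, mu_val, Fin.val_mk]
  split_ifs <;> first
    | (exfalso; omega)
    | (refine congrArg _ (congrArg _ (Fin.ext ?_));
       first
         | omega
         | (simp only [Fin.val_mk]; omega)
         | simp only [Fin.val_mk])

/-- The prism operator. -/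
noncomputable def Pop (n : ℕ) : Chains U n →+ Chains U (n + 1) :=
  Finsupp.liftAddHom fun σ => zmultiplesHom _
    (∑ i ∈ Finset.range (n + 1), (-1 : ℤ) ^ i • Finsupp.single (pr U g g' H n i σ) (1 : ℤ))

lemma Pop_single (n : ℕ) (σ : Simp U n) :
    Pop U g g' H n (Finsupp.single σ 1)
      = ∑ i ∈ Finset.range (n + 1), (-1 : ℤ) ^ i • Finsupp.single (pr U g g' H n i σ) (1 : ℤ) := by
  simp [Pop, Finsupp.liftAddHom_apply_single]

omit H in
lemma bd_single (n : ℕ) (σ : Simp U (n + 1)) :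
    bd U n (Finsupp.single σ 1)
      = ∑ j ∈ Finset.range (n + 2), (-1 : ℤ) ^ j • Finsupp.single (fc U n j σ) (1 : ℤ) := by
  have h1 : bd U n (Finsupp.single σ 1)
      = ∑ i : Fin (n + 2), (-1 : ℤ) ^ (i : ℕ) • Finsupp.single (face U i σ) (1 : ℤ) := by
    simp [bd, Finsupp.liftAddHom_apply_single]
  have h2 : ∀ i : Fin (n + 2), face U i σ = fc U n (i : ℕ) σ := by
    intro i
    unfold fc
    congr 1
    apply Fin.ext
    have := i.isLt
    simp only [Fin.val_mk]
    omega
  rw [h1]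
  rw [Finset.sum_congr rfl (fun i _ => by rw [h2 i])]
  exact Fin.sum_univ_eq_sum_range (fun j => (-1 : ℤ) ^ j • Finsupp.single (fc U n j σ) (1 : ℤ)) (n + 2)

/-- push a simplex forward along a relation-preserving map -/
def mapSimp (f : Y → Y) (hf : ∀ x y, (x, y) ∈ U → (f x, f y) ∈ U) {n : ℕ} (σ : Simp U n) :
    Simp U n :=
  ⟨fun k => f (σ.1 k), fun i j => hf _ _ (σ.2 i j)⟩

lemma mu_zero (n : ℕ) (σ : Simp U (n + 1)) :
    mu U g g' H n 0 σ = mapSimp U g' (fun x y hxy => (H x y hxy).2.2.2) σ := by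
  apply Subtype.ext
  funext k
  rw [mu_val, if_neg (Nat.not_lt_zero _)]
  rfl

lemma mu_top (n : ℕ) (σ : Simp U (n + 1)) :
    mu U g g' H n (n + 2) σ = mapSimp U g (fun x y hxy => (H x y hxy).1) σ := by
  apply Subtype.ext
  funext k
  rw [mu_val, if_pos k.isLt]
  rfl

set_option maxHeartbeats 2000000 in
lemma key (n : ℕ) (σ : Simp U (n + 1)) :
    bd U (n + 1) (Pop U g g' H (n + 1) (Finsupp.single σ 1))
      = Finsupp.single (mapSimp U g' (fun x y hxy => (H x y hxy).2.2.2) σ) 1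
        - Finsupp.single (mapSimp U g (fun x y hxy => (H x y hxy).1) σ) 1
        - Pop U g g' H n (bd U n (Finsupp.single σ 1)) := by
  classical
  set F : ℕ → ℕ → Chains U (n + 1) := fun i j =>
    (-1 : ℤ) ^ (i + j) • Finsupp.single (fc U (n+1) j (pr U g g' H (n+1) i σ)) (1 : ℤ) with hF
  set X : ℕ → ℕ → Chains U (n + 1) := fun i j =>
    (-1 : ℤ) ^ (i + j) • Finsupp.single (pr U g g' H n i (fc U n j σ)) (1 : ℤ) with hX
  have lhs1 : bd U (n + 1) (Pop U g g' H (n + 1) (Finsupp.single σ 1))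
      = ∑ i ∈ Finset.range (n + 2), ∑ j ∈ Finset.range (n + 3), F i j := by
    rw [Pop_single, map_sum]
    refine Finset.sum_congr rfl fun i _ => ?_
    rw [map_zsmul, bd_single, Finset.smul_sum]
    refine Finset.sum_congr rfl fun j _ => ?_
    rw [smul_smul, hF]
    simp only
    rw [pow_add]
  -- split the inner sum
  have hsplit : ∀ i ∈ Finset.range (n + 2), ∑ j ∈ Finset.range (n + 3), F i j
      = (∑ j ∈ Finset.Ico 0 i, F i j) + ((F i i + F i (i+1))
        + ∑ j ∈ Finset.Ico (i+2) (n+3), F i j) := by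
    intro i hi
    rw [Finset.mem_range] at hi
    rw [Finset.range_eq_Ico,
      ← Finset.sum_Ico_consecutive (F i) (Nat.zero_le i) (by omega : i ≤ n+3),
      ← Finset.sum_Ico_consecutive (F i) (by omega : i ≤ i+2) (by omega : i+2 ≤ n+3)]
    congr 2
    rw [Finset.sum_Ico_succ_top (by omega : i ≤ i+1), Finset.sum_Ico_succ_top (le_refl i),
      Finset.Ico_self, Finset.sum_empty, zero_add]
  have lhs2 : bd U (n + 1) (Pop U g g' H (n + 1) (Finsupp.single σ 1))
      = (∑ i ∈ Finset.range (n+2), ∑ j ∈ Finset.Ico 0 i, F i j)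
        + ((∑ i ∈ Finset.range (n+2), (F i i + F i (i+1)))
        + ∑ i ∈ Finset.range (n+2), ∑ j ∈ Finset.Ico (i+2) (n+3), F i j) := by
    rw [lhs1, Finset.sum_congr rfl hsplit, Finset.sum_add_distrib, Finset.sum_add_distrib]
  -- middle term telescopes
  have hmid : (∑ i ∈ Finset.range (n+2), (F i i + F i (i+1)))
      = Finsupp.single (mapSimp U g' (fun x y hxy => (H x y hxy).2.2.2) σ) 1
        - Finsupp.single (mapSimp U g (fun x y hxy => (H x y hxy).1) σ) 1 := by
    have : ∀ i ∈ Finset.range (n+2), F i i + F i (i+1)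
        = Finsupp.single (mu U g g' H n i σ) (1:ℤ)
          - Finsupp.single (mu U g g' H n (i+1) σ) (1:ℤ) := by
      intro i hi
      rw [Finset.mem_range] at hi
      rw [hF]
      simp only
      rw [L2 U g g' H n i (by omega) σ, L3 U g g' H n i (by omega) σ]
      rw [Even.neg_one_pow ⟨i, rfl⟩, one_smul]
      rw [show i + (i+1) = 2*i+1 by omega, Odd.neg_one_pow ⟨i, rfl⟩]
      rw [neg_smul, one_smul]
      abel
    rw [Finset.sum_congr rfl this,
      Finset.sum_range_sub' (fun c => Finsupp.single (mu U g g' H n c σ) (1:ℤ)) (n+2),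
      mu_zero, mu_top]
  -- first term
  have hA : (∑ i ∈ Finset.range (n+2), ∑ j ∈ Finset.Ico 0 i, F i j)
      = ∑ i ∈ Finset.range (n+1), ∑ j ∈ Finset.Ico 0 (i+1), (- X i j) := by
    rw [Finset.sum_range_succ']
    rw [show (∑ j ∈ Finset.Ico 0 0, F 0 j) = 0 by rw [Finset.Ico_self, Finset.sum_empty]]
    rw [add_zero]
    refine Finset.sum_congr rfl fun i hi => ?_
    rw [Finset.mem_range] at hi
    refine Finset.sum_congr rfl fun j hj => ?_
    rw [Finset.mem_Ico] at hj
    rw [hF, hX]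
    simp only
    rw [L1 U g g' H n (i+1) j (by omega) (by omega) σ]
    rw [show i+1-1 = i by omega, show i+1+j = (i+j)+1 by omega, pow_succ]
    rw [mul_comm, ← smul_smul, neg_one_zsmul]
  -- last term
  have hD : (∑ i ∈ Finset.range (n+2), ∑ j ∈ Finset.Ico (i+2) (n+3), F i j)
      = ∑ i ∈ Finset.range (n+1), ∑ j ∈ Finset.Ico (i+1) (n+2), (- X i j) := by
    rw [Finset.sum_range_succ]
    rw [show (∑ j ∈ Finset.Ico (n+1+2) (n+3), F (n+1) j) = 0 by
      rw [Finset.Ico_self, Finset.sum_empty]]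
    rw [add_zero]
    refine Finset.sum_congr rfl fun i hi => ?_
    rw [Finset.mem_range] at hi
    rw [Finset.sum_Ico_eq_sum_range, Finset.sum_Ico_eq_sum_range]
    rw [show n+3-(i+2) = n+2-(i+1) by omega]
    refine Finset.sum_congr rfl fun k hk => ?_
    rw [Finset.mem_range] at hk
    rw [hF, hX]
    simp only
    rw [L4 U g g' H n i (i+2+k) (by omega) (by omega) (by omega) σ]
    rw [show i+2+k-1 = i+1+k by omega]
    rw [show i+(i+2+k) = (i+(i+1+k))+1 by omega, pow_succ]
    rw [mul_comm, ← smul_smul, neg_one_zsmul]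
  -- combine A and D
  have hAD : (∑ i ∈ Finset.range (n+2), ∑ j ∈ Finset.Ico 0 i, F i j)
      + (∑ i ∈ Finset.range (n+2), ∑ j ∈ Finset.Ico (i+2) (n+3), F i j)
      = - ∑ i ∈ Finset.range (n+1), ∑ j ∈ Finset.range (n+2), X i j := by
    rw [hA, hD, ← Finset.sum_add_distrib, ← Finset.sum_neg_distrib]
    refine Finset.sum_congr rfl fun i hi => ?_
    rw [Finset.sum_Ico_consecutive (fun j => - X i j) (Nat.zero_le (i+1))
      (by rw [Finset.mem_range] at hi; omega : i+1 ≤ n+2)]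
    rw [← Finset.range_eq_Ico, Finset.sum_neg_distrib]
  -- the Pop ∘ bd term
  have hPop2 : Pop U g g' H n (bd U n (Finsupp.single σ 1))
      = ∑ i ∈ Finset.range (n+1), ∑ j ∈ Finset.range (n+2), X i j := by
    have h7 : Pop U g g' H n (bd U n (Finsupp.single σ 1))
        = ∑ j ∈ Finset.range (n+2), ∑ i ∈ Finset.range (n+1), X i j := by
      rw [bd_single, map_sum]
      refine Finset.sum_congr rfl fun j _ => ?_
      rw [map_zsmul, Pop_single, Finset.smul_sum]
      refine Finset.sum_congr rfl fun i _ => ?_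
      rw [smul_smul, hX]
      simp only
      rw [show ((-1:ℤ)^j * (-1)^i) = (-1)^(i+j) by rw [pow_add]; ring]
    rw [h7]
    exact Finset.sum_comm
  rw [lhs2, hmid, hPop2]
  rw [sub_eq_add_neg (_ - _), ← hAD]
  abel


omit H in
lemma mapSimp_single {n : ℕ} (f : Y → Y) (hf : ∀ x y, (x, y) ∈ U → (f x, f y) ∈ U)
    (σ : Simp U n) (m : ℤ) :
    Finsupp.mapDomain.addMonoidHom (mapSimp U f hf (n := n)) (Finsupp.single σ m)
      = Finsupp.single (mapSimp U f hf σ) m := by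
  show Finsupp.mapDomain _ _ = _
  rw [Finsupp.mapDomain_single]

/-- total coefficient homomorphism -/
noncomputable def tot (n : ℕ) : Chains U n →+ ℤ :=
  Finsupp.liftAddHom fun _ => zmultiplesHom ℤ 1

omit H in
lemma tot_single (n : ℕ) (σ : Simp U n) (m : ℤ) : tot U n (Finsupp.single σ m) = m := by
  simp [tot, Finsupp.liftAddHom_apply_single]

lemma homotopy (n : ℕ) (z : Chains U (n + 1)) :
    bd U (n + 1) (Pop U g g' H (n + 1) z)
      = Finsupp.mapDomain.addMonoidHom (mapSimp U g' (fun x y hxy => (H x y hxy).2.2.2) (n := n+1)) z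
        - Finsupp.mapDomain.addMonoidHom (mapSimp U g (fun x y hxy => (H x y hxy).1) (n := n+1)) z
        - Pop U g g' H n (bd U n z) := by
  induction z using Finsupp.induction_linear with
  | zero => simp
  | add a b ha hb =>
    simp only [map_add, ha, hb]
    abel
  | single σ m =>
    have hm : (Finsupp.single σ m : Chains U (n+1)) = m • Finsupp.single σ (1:ℤ) := by
      rw [Finsupp.smul_single, smul_eq_mul, mul_one]
    rw [hm, map_zsmul, map_zsmul, map_zsmul, map_zsmul, map_zsmul, key U g g' H n σ,
      mapSimp_single, mapSimp_single]
    rw [smul_sub, smul_sub, map_zsmul]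

set_option maxHeartbeats 1000000 in
lemma homotopy0 (z : Chains U 0) :
    bd U 0 (Pop U g g' H 0 z)
      = Finsupp.mapDomain.addMonoidHom (mapSimp U g' (fun x y hxy => (H x y hxy).2.2.2) (n := 0)) z
        - Finsupp.mapDomain.addMonoidHom (mapSimp U g (fun x y hxy => (H x y hxy).1) (n := 0)) z := by
  induction z using Finsupp.induction_linear with
  | zero => simp
  | add a b ha hb =>
    simp only [map_add, ha, hb]
    abel
  | single σ m =>
    have hm : (Finsupp.single σ m : Chains U 0) = m • Finsupp.single σ (1:ℤ) := by
      rw [Finsupp.smul_single, smul_eq_mul, mul_one]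
    rw [hm, map_zsmul, map_zsmul, map_zsmul, map_zsmul, mapSimp_single, mapSimp_single]
    rw [Pop_single]
    rw [show (∑ i ∈ Finset.range (0 + 1), (-1:ℤ)^i • Finsupp.single (pr U g g' H 0 i σ) (1:ℤ))
        = Finsupp.single (pr U g g' H 0 0 σ) (1:ℤ) by
      rw [Finset.sum_range_one, pow_zero, one_smul]]
    rw [bd_single]
    rw [show (∑ j ∈ Finset.range (0 + 2), (-1:ℤ)^j • Finsupp.single (fc U 0 j (pr U g g' H 0 0 σ)) (1:ℤ))
        = Finsupp.single (fc U 0 0 (pr U g g' H 0 0 σ)) (1:ℤ)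
          - Finsupp.single (fc U 0 1 (pr U g g' H 0 0 σ)) (1:ℤ) by
      rw [Finset.sum_range_succ, Finset.sum_range_one]
      norm_num
      exact sub_eq_add_neg _ _ |>.symm]
    have e0 : fc U 0 0 (pr U g g' H 0 0 σ) = mapSimp U g' (fun x y hxy => (H x y hxy).2.2.2) σ := by
      apply Subtype.ext
      funext k
      have hk := k.isLt
      simp only [fc_val, pr_val, Fin.val_mk]
      split_ifs <;> first
        | (exfalso; omega)
        | (show g' _ = g' _
           refine congrArg _ (congrArg _ (Fin.ext ?_))
           first
             | omega
             | (simp only [Fin.val_mk]; omega)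
             | simp only [Fin.val_mk])
    have e1 : fc U 0 1 (pr U g g' H 0 0 σ) = mapSimp U g (fun x y hxy => (H x y hxy).1) σ := by
      apply Subtype.ext
      funext k
      have hk := k.isLt
      simp only [fc_val, pr_val, Fin.val_mk]
      split_ifs <;> first
        | (exfalso; omega)
        | (show g _ = g _
           refine congrArg _ (congrArg _ (Fin.ext ?_))
           first
             | omega
             | (simp only [Fin.val_mk]; omega)
             | simp only [Fin.val_mk])
    rw [e0, e1, smul_sub]

lemma stepBdry (n : ℕ) (z : Chains U n) (hz : z ∈ rcycles U n) :
    Finsupp.mapDomain.addMonoidHom (mapSimp U g' (fun x y hxy => (H x y hxy).2.2.2) (n := n)) z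
      - Finsupp.mapDomain.addMonoidHom (mapSimp U g (fun x y hxy => (H x y hxy).1) (n := n)) z
      ∈ bdries U n := by
  cases n with
  | zero =>
    exact AddMonoidHom.mem_range.mpr ⟨Pop U g g' H 0 z, homotopy0 U g g' H z⟩
  | succ n =>
    have hz' : bd U n z = 0 := hz
    refine AddMonoidHom.mem_range.mpr ⟨Pop U g g' H (n+1) z, ?_⟩
    rw [homotopy U g g' H n z, hz', map_zero, sub_zero]

omit H in
lemma altsum (m : ℕ) : (∑ j ∈ Finset.range m, (-1:ℤ)^j) = if Even m then 0 else 1 := by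
  induction m with
  | zero => simp
  | succ k ih =>
    rw [Finset.sum_range_succ, ih]
    rcases Nat.even_or_odd k with h | h
    · rw [if_pos h, if_neg (by simp [Nat.even_add_one, h]), Even.neg_one_pow h, zero_add]
    · rw [if_neg (by simp [Nat.not_even_iff_odd.mpr h]), if_pos (by simp [Nat.even_add_one, Nat.not_even_iff_odd.mpr h]), Odd.neg_one_pow h]
      ring

omit H in
lemma tot_bd (m : ℕ) (hm : Odd m) (z : Chains U (m+1)) :
    tot U m (bd U m z) = tot U (m+1) z := by
  induction z using Finsupp.induction_linear with
  | zero => simp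
  | add a b ha hb => simp only [map_add, ha, hb]
  | single σ c =>
    have hm2 : (Finsupp.single σ c : Chains U (m+1)) = c • Finsupp.single σ (1:ℤ) := by
      rw [Finsupp.smul_single, smul_eq_mul, mul_one]
    rw [hm2, map_zsmul, map_zsmul, map_zsmul, tot_single, bd_single, map_sum]
    have : ∀ j ∈ Finset.range (m+2),
        tot U m ((-1:ℤ)^j • Finsupp.single (fc U m j σ) (1:ℤ)) = (-1:ℤ)^j := by
      intro j _
      rw [map_zsmul, tot_single, smul_eq_mul, mul_one]
    rw [Finset.sum_congr rfl this, altsum]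
    rw [if_neg (by rcases hm with ⟨t, ht⟩; exact (by simp [ht, parity_simps] : ¬ Even (m+2)))]

omit H in
lemma subsingleton_redH (n : ℕ) (h : ∀ z, z ∈ rcycles U n → z ∈ bdries U n) :
    Subsingleton (redH U n) := by
  constructor
  intro a b
  induction a using QuotientAddGroup.induction_on with | H x => ?_
  induction b using QuotientAddGroup.induction_on with | H y => ?_
  refine QuotientAddGroup.eq.mpr ?_
  exact AddSubgroup.mem_addSubgroupOf.mpr
    (AddSubgroup.add_mem _ (AddSubgroup.neg_mem _ (h x.1 x.2)) (h y.1 y.2))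

omit H in
lemma mapCh_const (n : ℕ) (f : Y → Y) (hf : ∀ x y, (x, y) ∈ U → (f x, f y) ∈ U)
    (δ : Simp U n) (hδ : ∀ τ : Simp U n, mapSimp U f hf τ = δ) (z : Chains U n) :
    Finsupp.mapDomain.addMonoidHom (mapSimp U f hf (n := n)) z
      = Finsupp.single δ (tot U n z) := by
  induction z using Finsupp.induction_linear with
  | zero => simp
  | add a b ha hb => rw [map_add, map_add, ha, hb, Finsupp.single_add]
  | single σ m => rw [mapSimp_single, hδ σ, tot_single]

end VRAux

open VRAux

open VR in
/-- Let `R` be a symmetric reflexive relation on `X`, `r > 0`, and let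
`σ` be a simplex (finite clique) of the clique complex `Σ^X_R`. The subcomplex
`S(σ)` of `Σ^{X×I}_{R×U_r}` spanned by the vertices `(v,t)` with `v ∈ σ`, `t ∈ I`
— realized as the clique complex on the vertex set `↥σ × I` with the product
relation `(x,s) ∼ (y,t) ↔ (x,y) ∈ R ∧ |s−t| < r` — is acyclic. -/
theorem stmt17 {X : Type*} (R : Set (X × X))
    (hsymm : ∀ x y : X, (x, y) ∈ R → (y, x) ∈ R)
    (hrefl : ∀ x : X, (x, x) ∈ R)
    (r : ℝ) (hr : 0 < r)
    (σ : Finset X) (hσ : ∀ a ∈ σ, ∀ b ∈ σ, (a, b) ∈ R) :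
    ∀ n : ℕ, Subsingleton
      (redH {p : ({x // x ∈ σ} × unitInterval) × ({x // x ∈ σ} × unitInterval) |
        (p.1.1.1, p.2.1.1) ∈ R ∧ |p.1.2.1 - p.2.2.1| < r} n) := by
  intro n
  classical
  set Y := ({x // x ∈ σ} × unitInterval) with hY
  set W : Set (Y × Y) := {p : Y × Y | (p.1.1.1, p.2.1.1) ∈ R ∧ |p.1.2.1 - p.2.2.1| < r} with hW
  rcases Finset.eq_empty_or_nonempty σ with hemp | ⟨v₀, hv₀⟩
  · apply subsingleton_redH
    intro z hz
    have hE : IsEmpty (Simp W n) :=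
      ⟨fun s => Finset.eq_empty_iff_forall_notMem.mp hemp _ ((s.1 0).1.2)⟩
    have hz0 : z = 0 := Finsupp.ext fun a => (hE.false a).elim
    rw [hz0]
    exact zero_mem _
  · apply subsingleton_redH
    intro z hz
    -- the distinguished point and the crushing maps
    have h01 : (0:ℝ) ∈ unitInterval := by constructor <;> norm_num
    set p0 : Y := (⟨v₀, hv₀⟩, ⟨0, h01⟩) with hp0
    set gg : ℕ → Y → Y := fun k p => (if k = 0 then p.1 else ⟨v₀, hv₀⟩,
      ⟨max 0 (min (p.2 : ℝ) (1 - k * (r/2))),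
        ⟨le_max_left _ _, max_le (by norm_num) (le_trans (min_le_left _ _) p.2.2.2)⟩⟩) with hgg
    -- the key clamp estimate
    have clamp : ∀ (s t c c' : ℝ), |s - t| < r → |c - c'| < r →
        |max 0 (min s c) - max 0 (min t c')| < r := by
      intro s t c c' hst hcc
      have h1 : |min s c - min t c'| ≤ max |s - t| |c - c'| := abs_min_sub_min_le_max s c t c'
      have h2 : |max 0 (min s c) - max 0 (min t c')| ≤ max |(0:ℝ) - 0| |min s c - min t c'| :=
        abs_max_sub_max_le_max 0 (min s c) 0 (min t c')
      have h3 : max |(0:ℝ) - 0| |min s c - min t c'| < r := by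
        rw [sub_zero, abs_zero]
        exact max_lt hr (lt_of_le_of_lt h1 (max_lt hst hcc))
      exact lt_of_le_of_lt h2 h3
    have hcdiff : ∀ k k' : ℕ, k ≤ k' + 1 → k' ≤ k + 1 →
        |(1 - k * (r/2)) - (1 - k' * (r/2))| < r := by
      intro k k' h1 h2
      rcases Nat.lt_trichotomy k k' with h | h | h
      · have hk' : k' = k + 1 := by omega
        subst hk'
        have h3 : (1 - k * (r/2)) - (1 - (k+1 : ℕ) * (r/2)) = r/2 := by push_cast; ring
        rw [h3, abs_of_pos (by linarith)]
        linarith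
      · subst h
        rw [sub_self, abs_zero]
        exact hr
      · have hk : k = k' + 1 := by omega
        subst hk
        have h3 : (1 - (k'+1 : ℕ) * (r/2)) - (1 - k' * (r/2)) = -(r/2) := by push_cast; ring
        rw [h3, abs_neg, abs_of_pos (by linarith)]
        linarith
    have hcont : ∀ k : ℕ, ∀ x y : Y, (x, y) ∈ W →
        ((gg k x, gg k y) ∈ W ∧ (gg k x, gg (k+1) y) ∈ W ∧
         (gg (k+1) x, gg k y) ∈ W ∧ (gg (k+1) x, gg (k+1) y) ∈ W) := by
      intro k x y hxy
      obtain ⟨hR, hd⟩ := hxy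
      refine ⟨⟨hσ _ (ite _ x.1 _).2 _ (ite _ y.1 _).2, ?_⟩,
              ⟨hσ _ (ite _ x.1 _).2 _ (ite _ y.1 _).2, ?_⟩,
              ⟨hσ _ (ite _ x.1 _).2 _ (ite _ y.1 _).2, ?_⟩,
              ⟨hσ _ (ite _ x.1 _).2 _ (ite _ y.1 _).2, ?_⟩⟩ <;>
        exact clamp _ _ _ _ hd (hcdiff _ _ (by omega) (by omega))
    have hpres : ∀ k, ∀ x y : Y, (x, y) ∈ W → (gg k x, gg k y) ∈ W :=
      fun k x y h => (hcont k x y h).1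
    -- telescoping
    have tele : ∀ k : ℕ, z - Finsupp.mapDomain.addMonoidHom
        (mapSimp W (gg k) (hpres k) (n := n)) z ∈ bdries W n := by
      intro k
      induction k with
      | zero =>
        have hfun : mapSimp W (gg 0) (hpres 0) (n := n) = id := by
          funext τ
          apply Subtype.ext
          funext i
          show gg 0 (τ.1 i) = τ.1 i
          refine Prod.ext ?_ (Subtype.ext ?_)
          · show (if (0:ℕ) = 0 then (τ.1 i).1 else ⟨v₀, hv₀⟩) = (τ.1 i).1
            rw [if_pos rfl]
          · show max 0 (min ((τ.1 i).2 : ℝ) (1 - (0:ℕ) * (r/2))) = ((τ.1 i).2 : ℝ)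
            push_cast
            rw [zero_mul, sub_zero, min_eq_left (τ.1 i).2.2.2, max_eq_right (τ.1 i).2.2.1]
        have hid : Finsupp.mapDomain.addMonoidHom (mapSimp W (gg 0) (hpres 0) (n := n)) z = z := by
          show Finsupp.mapDomain _ z = z
          rw [hfun, Finsupp.mapDomain_id]
        rw [hid, sub_self]
        exact zero_mem _
      | succ k ih =>
        have hstep := stepBdry W (gg k) (gg (k+1)) (hcont k) n z hz
        have h2 : z - Finsupp.mapDomain.addMonoidHom (mapSimp W (gg (k+1)) (hpres (k+1)) (n := n)) z
            = (z - Finsupp.mapDomain.addMonoidHom (mapSimp W (gg k) (hpres k) (n := n)) z)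
              - (Finsupp.mapDomain.addMonoidHom (mapSimp W (gg (k+1)) (hpres (k+1)) (n := n)) z
                - Finsupp.mapDomain.addMonoidHom (mapSimp W (gg k) (hpres k) (n := n)) z) := by
          abel
        rw [h2]
        exact AddSubgroup.sub_mem _ ih hstep
    -- the last map crushes everything to p0
    obtain ⟨K, hK⟩ : ∃ K : ℕ, 1 - (K + 1 : ℕ) * (r/2) ≤ 0 := by
      obtain ⟨K, hK⟩ := exists_nat_ge (2/r)
      refine ⟨K, ?_⟩
      have h4 : (2:ℝ) ≤ K * r := by
        rw [div_le_iff₀ hr] at hK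
        linarith
      push_cast
      nlinarith
    set KK := K + 1 with hKK
    have hδmem : ∀ i j : Fin (n+1), ((fun _ => p0) i, (fun _ => p0) j) ∈ W := by
      intro i j
      refine ⟨hσ _ hv₀ _ hv₀, ?_⟩
      show |((0:ℝ)) - 0| < r
      rw [sub_self, abs_zero]
      exact hr
    set δ : Simp W n := ⟨fun _ => p0, hδmem⟩ with hδ
    have hcrush : ∀ τ : Simp W n, mapSimp W (gg KK) (hpres KK) τ = δ := by
      intro τ
      apply Subtype.ext
      funext i
      show gg KK (τ.1 i) = p0
      refine Prod.ext ?_ (Subtype.ext ?_)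
      · show (if KK = 0 then (τ.1 i).1 else ⟨v₀, hv₀⟩) = ⟨v₀, hv₀⟩
        rw [if_neg (by omega)]
      · show max 0 (min ((τ.1 i).2 : ℝ) (1 - (KK:ℕ) * (r/2))) = (0:ℝ)
        rw [max_eq_left (le_trans (min_le_right _ _) (by rw [hKK]; exact_mod_cast hK))]
    have hconst : Finsupp.mapDomain.addMonoidHom (mapSimp W (gg KK) (hpres KK) (n := n)) z
        = Finsupp.single δ (tot W n z) := mapCh_const W n (gg KK) (hpres KK) δ hcrush z
    -- the crushed chain is a boundary
    have hfin : Finsupp.single δ (tot W n z) ∈ bdries W n := by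
      cases n with
      | zero =>
        have h0 : tot W 0 z = 0 := hz
        rw [h0, Finsupp.single_zero]
        exact zero_mem _
      | succ m =>
        have hzc : bd W m z = 0 := hz
        rcases Nat.even_or_odd m with hme | hmo
        · -- n = m+1 odd : exhibit a bounding chain
          have hδ'mem : ∀ i j : Fin (m+3), ((fun _ => p0) i, (fun _ => p0) j) ∈ W := by
            intro i j
            refine ⟨hσ _ hv₀ _ hv₀, ?_⟩
            show |((0:ℝ)) - 0| < r
            rw [sub_self, abs_zero]
            exact hr
          set δ' : Simp W (m+2) := ⟨fun _ => p0, hδ'mem⟩ with hδ'2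
          refine AddMonoidHom.mem_range.mpr ⟨Finsupp.single δ' (tot W (m+1) z), ?_⟩
          have hsm : (Finsupp.single δ' (tot W (m+1) z) : Chains W (m+2))
              = (tot W (m+1) z) • Finsupp.single δ' (1:ℤ) := by
            rw [Finsupp.smul_single, smul_eq_mul, mul_one]
          rw [hsm, map_zsmul, bd_single]
          have hface : ∀ j ∈ Finset.range (m+3),
              (-1:ℤ)^j • Finsupp.single (fc W (m+1) j δ') (1:ℤ)
                = (-1:ℤ)^j • Finsupp.single δ (1:ℤ) := by
            intro j _
            have h9 : fc W (m+1) j δ' = δ := by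
              apply Subtype.ext
              funext k
              rw [fc_val]
              split_ifs <;> rfl
            rw [h9]
          rw [Finset.sum_congr rfl hface, ← Finset.sum_smul, altsum,
            if_neg (by simp [Nat.even_add_one, parity_simps, hme]), one_smul,
            Finsupp.smul_single, smul_eq_mul, mul_one]
        · -- n = m+1 even : the total coefficient vanishes
          have h5 : tot W (m+1) z = 0 := by
            rw [← tot_bd W m hmo z, hzc, map_zero]
          rw [h5, Finsupp.single_zero]
          exact zero_mem _
    have h8 : Finsupp.mapDomain.addMonoidHom (mapSimp W (gg KK) (hpres KK) (n := n)) z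
        ∈ bdries W n := by
      rw [hconst]
      exact hfin
    have hzmem := AddSubgroup.add_mem _ (tele KK) h8
    rwa [sub_add_cancel] at hzmem
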